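/- Let |ρ⟩ be a pure state and {A_i} a finite collection of positive semi-definite operators forming a measurement (Σ_i A_i² ≤ I suffices, or POVM square roots). Define ρ' := Σ_i A_i |ρ⟩⟨ρ| A_i. Then F²(|ρ⟩⟨ρ|, ρ') = Σ_i (Tr(A_i |ρ⟩⟨ρ|))², and moreover Σ_i (Tr(A_i ρ))² ≥ Σ_i (Tr(A_i² ρ))². -/

import Mathlib

open Matrix Kronecker Complex ComplexOrder

noncomputable section

namespace QIT

open scoped Classical

variable {n : Type*} [Fintype n] [DecidableEq n]

/-- Square root of a positive semidefinite matrix (junk value `0` otherwise). -/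
def msqrt (A : Matrix n n ℂ) : Matrix n n ℂ :=
  if h : A.PosSemidef then
    (h.1.eigenvectorUnitary : Matrix n n ℂ) *
      Matrix.diagonal ((↑) ∘ Real.sqrt ∘ h.1.eigenvalues) *
      (star h.1.eigenvectorUnitary : Matrix n n ℂ)
  else 0

/-- Fidelity `F(ρ,σ) = Tr √(√σ ρ √σ)`. -/
def fid (ρ σ : Matrix n n ℂ) : ℝ :=
  ((msqrt (msqrt σ * ρ * msqrt σ)).trace).re

/-- Purified distance `P(ρ,σ) = √(1 - F(ρ,σ)²)`. -/
def Pdist (ρ σ : Matrix n n ℂ) : ℝ := Real.sqrt (1 - fid ρ σ ^ 2)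

/-- A density operator: positive semidefinite with unit trace. -/
def IsDensity (ρ : Matrix n n ℂ) : Prop := ρ.PosSemidef ∧ ρ.trace = 1

/-- A test (POVM element): `0 ≤ Λ ≤ I`. -/
def IsTest (Λ : Matrix n n ℂ) : Prop := Λ.PosSemidef ∧ (1 - Λ).PosSemidef

/-- Smooth hypothesis testing divergence `D_H^ε(ρ‖σ)` (log base 2). -/
def DH (ε : ℝ) (ρ σ : Matrix n n ℂ) : ℝ :=
  sSup {x : ℝ | ∃ Λ : Matrix n n ℂ, IsTest Λ ∧ (Λ * ρ).trace.re ≥ 1 - ε ∧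
    x = Real.logb 2 (1 / (Λ * σ).trace.re)}

/-- Max-relative entropy `D_max(ρ‖σ)`. -/
def Dmax (ρ σ : Matrix n n ℂ) : ℝ :=
  sInf {l : ℝ | ((((2:ℝ) ^ l : ℝ) : ℂ) • σ - ρ).PosSemidef}

/-- Matrix logarithm (base 2) via the spectral decomposition. -/
def mlog (A : Matrix n n ℂ) : Matrix n n ℂ :=
  if h : A.IsHermitian then
    (h.eigenvectorUnitary : Matrix n n ℂ) *
      Matrix.diagonal (fun i => (Real.logb 2 (h.eigenvalues i) : ℂ)) *
      (h.eigenvectorUnitary : Matrix n n ℂ)ᴴ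
  else 0

/-- Quantum relative entropy `D(ρ‖σ) = Tr ρ (log ρ - log σ)` (log base 2). -/
def Drel (ρ σ : Matrix n n ℂ) : ℝ :=
  ((ρ * mlog ρ).trace - (ρ * mlog σ).trace).re

/-- Square root of the Moore–Penrose inverse, on the support. -/
def pinvSqrt (A : Matrix n n ℂ) : Matrix n n ℂ :=
  if h : A.IsHermitian then
    (h.eigenvectorUnitary : Matrix n n ℂ) *
      Matrix.diagonal (fun i =>
        ((if h.eigenvalues i = 0 then 0 else (Real.sqrt (h.eigenvalues i))⁻¹ : ℝ) : ℂ)) *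
      (h.eigenvectorUnitary : Matrix n n ℂ)ᴴ
  else 0

variable {m : Type*} [Fintype m] [DecidableEq m]

/-- Partial trace over the second tensor factor. -/
def ptraceSnd (ρ : Matrix (n × m) (n × m) ℂ) : Matrix n n ℂ :=
  Matrix.of fun i j => ∑ k, ρ (i, k) (j, k)

/-- Partial trace over the first tensor factor. -/
def ptraceFst (ρ : Matrix (n × m) (n × m) ℂ) : Matrix m m ℂ :=
  Matrix.of fun i j => ∑ k, ρ (k, i) (k, j)


set_option linter.unusedSectionVars false

def _root_.Matrix.PosSemidef.sqrt {A : Matrix n n ℂ} (h : A.PosSemidef) : Matrix n n ℂ :=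
  (h.1.eigenvectorUnitary : Matrix n n ℂ) *
      Matrix.diagonal ((↑) ∘ Real.sqrt ∘ h.1.eigenvalues) *
      (star h.1.eigenvectorUnitary : Matrix n n ℂ)

open scoped MatrixOrder in
lemma _root_.Matrix.PosSemidef.sqrt_eq_cfc' {A : Matrix n n ℂ} (h : A.PosSemidef) :
    h.sqrt = CFC.sqrt A := by
  rw [CFC.sqrt_eq_cfc, cfc_nnreal_eq_real _ A h.nonneg, h.1.cfc_eq]
  simp only [IsHermitian.cfc, Unitary.conjStarAlgAut_apply, Real.coe_sqrt, Real.coe_toNNReal']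
  unfold Matrix.PosSemidef.sqrt
  congr 3
  funext i
  simp [max_eq_left (h.eigenvalues_nonneg i)]

open scoped MatrixOrder in
lemma _root_.Matrix.PosSemidef.posSemidef_sqrt {A : Matrix n n ℂ} (h : A.PosSemidef) :
    h.sqrt.PosSemidef := by
  rw [h.sqrt_eq_cfc']
  exact (CFC.sqrt_nonneg A).posSemidef

open scoped MatrixOrder in
lemma _root_.Matrix.PosSemidef.sqrt_mul_self {A : Matrix n n ℂ} (h : A.PosSemidef) :
    h.sqrt * h.sqrt = A := by
  rw [h.sqrt_eq_cfc']
  exact CFC.sqrt_mul_sqrt_self A h.nonneg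

open scoped MatrixOrder in
lemma _root_.Matrix.PosSemidef.eq_sqrt_of_sq_eq {B : Matrix n n ℂ} (hB : B.PosSemidef)
    {A : Matrix n n ℂ} (hA : A.PosSemidef) (hBA : B ^ 2 = A) : B = hA.sqrt := by
  rw [hA.sqrt_eq_cfc']
  exact (CFC.sqrt_unique (by rw [← sq]; exact hBA) hB.nonneg).symm

lemma vmv_mulVec (a b x : n → ℂ) : vecMulVec a b *ᵥ x = (b ⬝ᵥ x) • a := by
  ext i
  simp only [vecMulVec_apply, mulVec, dotProduct, Pi.smul_apply, smul_eq_mul,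
    Finset.sum_mul, Finset.mul_sum]
  exact Finset.sum_congr rfl fun j _ => by ring

lemma mul_vmv (B : Matrix n n ℂ) (a b : n → ℂ) : B * vecMulVec a b = vecMulVec (B *ᵥ a) b := by
  ext i j
  simp only [vecMulVec_apply, mul_apply, mulVec, dotProduct, Finset.sum_mul]
  exact Finset.sum_congr rfl fun k _ => by ring

lemma vmv_mul (a b : n → ℂ) (B : Matrix n n ℂ) : vecMulVec a b * B = vecMulVec a (b ᵥ* B) := by
  ext i j
  simp only [vecMulVec_apply, mul_apply, vecMul, dotProduct, Finset.mul_sum]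
  exact Finset.sum_congr rfl fun k _ => by ring

lemma trace_vmv (a b : n → ℂ) : (vecMulVec a b).trace = b ⬝ᵥ a := by
  simp [trace, vecMulVec_apply, dotProduct, mul_comm, Matrix.diag]

lemma star_dot_self (w x : n → ℂ) : star x ⬝ᵥ w = star (star w ⬝ᵥ x) :=
  star_dotProduct _ _

lemma vmv_posSemidef (w : n → ℂ) : (vecMulVec w (star w)).PosSemidef := by
  rw [posSemidef_iff_dotProduct_mulVec]
  constructor
  · ext i j
    simp [vecMulVec_apply, conjTranspose_apply, mul_comm]
  · intro x
    rw [vmv_mulVec, dotProduct_smul, smul_eq_mul, star_dot_self, mul_comm]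
    exact mul_star_self_nonneg (star x ⬝ᵥ w)

lemma dot_self_nonneg (w : n → ℂ) : 0 ≤ star w ⬝ᵥ w := by
  have h := (Matrix.PosSemidef.one (n := n) (R := ℂ)).dotProduct_mulVec_nonneg w
  rwa [one_mulVec] at h

lemma real_of_nonneg {z : ℂ} (h : 0 ≤ z) : z = (z.re : ℂ) := by
  rw [Complex.le_def] at h
  exact Complex.ext rfl (by simpa using h.2.symm)

lemma dot_self_re (w : n → ℂ) : (star w ⬝ᵥ w).re = ∑ i, Complex.normSq (w i) := by
  rw [dotProduct, Complex.re_sum]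
  exact Finset.sum_congr rfl fun i _ => by
    simp [Complex.normSq_apply, Complex.mul_re]

lemma trace_msqrt_vmv (w : n → ℂ) :
    (msqrt (vecMulVec w (star w))).trace = ((Real.sqrt (star w ⬝ᵥ w).re : ℝ) : ℂ) := by
  have hM := vmv_posSemidef w
  rw [msqrt, dif_pos hM]
  change hM.sqrt.trace = _
  by_cases hw : w = 0
  · subst hw
    have h0 : vecMulVec (0 : n → ℂ) (star (0 : n → ℂ)) = (0 : Matrix n n ℂ) := by
      ext i j; simp [vecMulVec_apply]
    have hz : (0 : Matrix n n ℂ) = hM.sqrt :=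
      Matrix.PosSemidef.zero.eq_sqrt_of_sq_eq hM (by rw [h0]; simp)
    rw [← hz]
    simp
  · set t : ℝ := (star w ⬝ᵥ w).re with ht
    have htpos : 0 < t := by
      rw [ht, dot_self_re]
      obtain ⟨i, hi⟩ := Function.ne_iff.mp hw
      exact Finset.sum_pos' (fun j _ => Complex.normSq_nonneg _)
        ⟨i, Finset.mem_univ i, by simpa using hi⟩
    have hteq : star w ⬝ᵥ w = (t : ℂ) := real_of_nonneg (dot_self_nonneg w)
    set r : ℝ := Real.sqrt t with hrdef
    have hr : 0 < r := Real.sqrt_pos.mpr htpos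
    have hr2 : r ^ 2 = t := Real.sq_sqrt htpos.le
    set S : Matrix n n ℂ := ((r⁻¹ : ℝ) : ℂ) • vecMulVec w (star w) with hS
    have hSpos : S.PosSemidef := by
      rw [posSemidef_iff_dotProduct_mulVec]
      constructor
      · show (((r⁻¹ : ℝ) : ℂ) • vecMulVec w (star w))ᴴ = _
        rw [conjTranspose_smul, hM.1, Complex.star_def, Complex.conj_ofReal]
      · intro x
        rw [hS, smul_mulVec, dotProduct_smul, smul_eq_mul]
        exact mul_nonneg (Complex.zero_le_real.mpr (inv_nonneg.mpr hr.le)) (hM.dotProduct_mulVec_nonneg x)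
    have hMM : vecMulVec w (star w) * vecMulVec w (star w)
        = (t : ℂ) • vecMulVec w (star w) := by
      rw [mul_vmv, vmv_mulVec, hteq]
      ext i j
      simp [vecMulVec_apply]
      ring
    have hsq : S ^ 2 = vecMulVec w (star w) := by
      have hrr : (r⁻¹ * r⁻¹ * t : ℝ) = 1 := by
        field_simp
        nlinarith
      have hc : (((r⁻¹ : ℝ) : ℂ) * ((r⁻¹ : ℝ) : ℂ) * ((t : ℝ) : ℂ)) = 1 := by
        rw [← Complex.ofReal_mul, ← Complex.ofReal_mul, hrr, Complex.ofReal_one]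
      rw [hS, pow_two, Matrix.smul_mul, Matrix.mul_smul, hMM, smul_smul, smul_smul,
        hc, one_smul]
    have hSs : S = hM.sqrt := hSpos.eq_sqrt_of_sq_eq hM hsq
    rw [← hSs, hS, trace_smul, trace_vmv, hteq, smul_eq_mul, ← Complex.ofReal_mul]
    congr 1
    field_simp
    nlinarith

lemma trace_mul_vmv (B : Matrix n n ℂ) (a : n → ℂ) :
    (B * vecMulVec a (star a)).trace = star a ⬝ᵥ (B *ᵥ a) := by
  rw [mul_vmv, trace_vmv]

lemma dot_sum_mulVec {ι : Type*} [Fintype ι] (f : ι → Matrix n n ℂ) (x y : n → ℂ) :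
    x ⬝ᵥ ((∑ i, f i) *ᵥ y) = ∑ i, x ⬝ᵥ (f i *ᵥ y) := by
  have h1 : (∑ i, f i) *ᵥ y = ∑ i, f i *ᵥ y := by
    ext a
    simp only [mulVec, dotProduct, Finset.sum_apply, Finset.sum_mul, Matrix.sum_apply]
    rw [Finset.sum_comm]
  rw [h1]
  simp only [dotProduct, Finset.sum_apply, Finset.mul_sum]
  rw [Finset.sum_comm]

lemma sub_sq_posSemidef (B : Matrix n n ℂ) (hB : B.PosSemidef)
    (h1 : ∀ x : n → ℂ, (star x ⬝ᵥ ((B * B) *ᵥ x)).re ≤ (star x ⬝ᵥ x).re) :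
    (B - B * B).PosSemidef := by
  have h := hB.1
  have hl0 : ∀ j, 0 ≤ h.eigenvalues j := hB.eigenvalues_nonneg
  have hl1 : ∀ j, h.eigenvalues j ≤ 1 := by
    intro j
    have hu : B *ᵥ ⇑(h.eigenvectorBasis j) = h.eigenvalues j • ⇑(h.eigenvectorBasis j) :=
      h.mulVec_eigenvectorBasis j
    set u : n → ℂ := ⇑(h.eigenvectorBasis j) with hudef
    have huu : star u ⬝ᵥ u = 1 := by
      have e1 : (star u ⬝ᵥ u : ℂ) = inner ℂ (h.eigenvectorBasis j) (h.eigenvectorBasis j) := by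
        rw [EuclideanSpace.inner_eq_star_dotProduct, dotProduct_comm]
      rw [e1, inner_self_eq_norm_sq_to_K, h.eigenvectorBasis.orthonormal.1 j]
      simp
    have h2 : (B * B) *ᵥ u = h.eigenvalues j • (h.eigenvalues j • u) := by
      rw [← mulVec_mulVec, hu, mulVec_smul, hu]
    have h3 := h1 u
    rw [h2, dotProduct_smul, dotProduct_smul, huu] at h3
    simp only [Complex.real_smul, mul_one, ← Complex.ofReal_mul, Complex.ofReal_re,
      Complex.one_re] at h3
    nlinarith [hl0 j, h3]
  set U : Matrix n n ℂ := (h.eigenvectorUnitary : Matrix n n ℂ) with hUdef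
  have hUU : star U * U = 1 := mem_unitaryGroup_iff'.mp h.eigenvectorUnitary.2
  have hcancel : ∀ Y : Matrix n n ℂ, star U * (U * Y) = Y := fun Y => by
    rw [← mul_assoc, hUU, one_mul]
  set D : Matrix n n ℂ := diagonal (RCLike.ofReal ∘ h.eigenvalues) with hDdef
  have hsp : B = U * D * star U := h.spectral_theorem
  have hBB : B * B = U * (D * D) * star U := by
    rw [hsp]
    simp only [mul_assoc]
    rw [hcancel]
  have hD : B - B * B
      = U * diagonal (fun j =>
          (RCLike.ofReal (h.eigenvalues j - h.eigenvalues j * h.eigenvalues j) : ℂ))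
        * star U := by
    rw [hBB]
    nth_rewrite 1 [hsp]
    rw [← Matrix.sub_mul, ← Matrix.mul_sub]
    congr 2
    rw [hDdef, diagonal_mul_diagonal]
    ext i j
    rcases eq_or_ne i j with rfl | hij
    · simp only [Matrix.sub_apply, Matrix.diagonal_apply_eq, Function.comp_apply]
      push_cast
      ring
    · simp [Matrix.sub_apply, Matrix.diagonal_apply_ne _ hij]
  rw [hD]
  have hdiag : (diagonal fun j =>
      (RCLike.ofReal (h.eigenvalues j - h.eigenvalues j * h.eigenvalues j) : ℂ)).PosSemidef :=
    Matrix.PosSemidef.diagonal (by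
      intro j
      have hr : 0 ≤ h.eigenvalues j - h.eigenvalues j * h.eigenvalues j := by
        nlinarith [hl0 j, hl1 j]
      exact Complex.zero_le_real.mpr hr)
  have hfin := hdiag.mul_mul_conjTranspose_same U
  rwa [← Matrix.star_eq_conjTranspose] at hfin


set_option maxHeartbeats 1000000 in
/-- fidelity after a gentle POVM-square-root measurement on a pure state. -/
theorem statement2 {n ι : Type*} [Fintype n] [DecidableEq n] [Fintype ι]
    (v : n → ℂ) (hv : star v ⬝ᵥ v = 1)
    (A : ι → Matrix n n ℂ) (hA : ∀ i, (A i).PosSemidef)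
    (hsum : ((1 : Matrix n n ℂ) - ∑ i, A i * A i).PosSemidef) :
    fid (vecMulVec v (star v)) (∑ i, A i * vecMulVec v (star v) * A i) ^ 2
        = ∑ i, ((A i * vecMulVec v (star v)).trace.re) ^ 2 ∧
      ∑ i, ((A i * vecMulVec v (star v)).trace.re) ^ 2
        ≥ ∑ i, ((A i * A i * vecMulVec v (star v)).trace.re) ^ 2 := by
  have hρ : (vecMulVec v (star v)).PosSemidef := vmv_posSemidef v
  have hAH : ∀ i, (A i)ᴴ = A i := fun i => (hA i).1
  have hsand : ∀ B : Matrix n n ℂ, Bᴴ = B →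
      B * vecMulVec v (star v) * B = vecMulVec (B *ᵥ v) (star (B *ᵥ v)) := by
    intro B hB
    rw [mul_vmv, vmv_mul]
    congr 1
    rw [star_mulVec, hB]
  have hσ : (∑ i, A i * vecMulVec v (star v) * A i).PosSemidef := by
    apply Finset.sum_induction _ _ (fun a b (ha : a.PosSemidef) (hb : b.PosSemidef) => ha.add hb)
      Matrix.PosSemidef.zero
    intro i _
    have := hρ.mul_mul_conjTranspose_same (A i)
    rwa [hAH i] at this
  -- z values
  set z : ι → ℂ := fun i => star v ⬝ᵥ (A i *ᵥ v) with hzdef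
  have hz0 : ∀ i, 0 ≤ z i := fun i => (hA i).dotProduct_mulVec_nonneg v
  have hAA : ∀ i, (A i * A i).PosSemidef := by
    intro i
    have := Matrix.posSemidef_conjTranspose_mul_self (A i)
    rwa [hAH i] at this
  set y : ι → ℂ := fun i => star v ⬝ᵥ ((A i * A i) *ᵥ v) with hydef
  have hy0 : ∀ i, 0 ≤ y i := fun i => (hAA i).dotProduct_mulVec_nonneg v
  have htrz : ∀ i, (A i * vecMulVec v (star v)).trace = z i := fun i => trace_mul_vmv _ _
  have htry : ∀ i, (A i * A i * vecMulVec v (star v)).trace = y i := fun i => trace_mul_vmv _ _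
  -- fidelity
  set s : Matrix n n ℂ := hσ.sqrt with hsdef
  have hs : s.PosSemidef := hσ.posSemidef_sqrt
  set w : n → ℂ := s *ᵥ v with hwdef
  have hmsq : msqrt (∑ i, A i * vecMulVec v (star v) * A i) = s := dif_pos hσ
  have hfid : fid (vecMulVec v (star v)) (∑ i, A i * vecMulVec v (star v) * A i)
      = Real.sqrt (star w ⬝ᵥ w).re := by
    rw [fid, hmsq, hsand s hs.1.eq, trace_msqrt_vmv, Complex.ofReal_re]
  have hww : star w ⬝ᵥ w = ∑ i, star v ⬝ᵥ ((A i * vecMulVec v (star v) * A i) *ᵥ v) := by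
    rw [hwdef, star_mulVec, hs.1.eq, ← dotProduct_mulVec, mulVec_mulVec, hσ.sqrt_mul_self,
      dot_sum_mulVec]
  have hterm : ∀ i, star v ⬝ᵥ ((A i * vecMulVec v (star v) * A i) *ᵥ v)
      = (((z i).re ^ 2 : ℝ) : ℂ) := by
    intro i
    rw [hsand (A i) (hAH i), vmv_mulVec, dotProduct_smul, smul_eq_mul,
      star_dot_self v (A i *ᵥ v)]
    have hzre : (star v ⬝ᵥ (A i *ᵥ v)) = ((z i).re : ℂ) := real_of_nonneg (hz0 i)
    rw [hzre, Complex.star_def, Complex.conj_ofReal, ← Complex.ofReal_mul]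
    norm_cast
    ring
  have hwwre : (star w ⬝ᵥ w).re = ∑ i, (z i).re ^ 2 := by
    rw [hww]
    rw [Finset.sum_congr rfl fun i _ => hterm i]
    rw [Complex.re_sum]
    simp [← Complex.ofReal_pow]
  constructor
  · rw [hfid, Real.sq_sqrt, hwwre]
    · exact Finset.sum_congr rfl fun i _ => by rw [htrz i]
    · rw [hwwre]
      positivity
  · -- second part
    have hkey : ∀ i, (y i).re ≤ (z i).re := by
      intro i
      have hsub := sub_sq_posSemidef (A i) (hA i) ?_
      · have h0 := hsub.dotProduct_mulVec_nonneg v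
        rw [Matrix.sub_mulVec, dotProduct_sub] at h0
        have hre := (Complex.le_def.mp h0).1
        simp only [Complex.zero_re, Complex.sub_re] at hre
        have : (y i).re ≤ (z i).re := by
          rw [hzdef, hydef]
          linarith
        exact this
      · intro x
        have h0' := hsum.dotProduct_mulVec_nonneg x
        rw [Matrix.sub_mulVec, one_mulVec, dotProduct_sub] at h0'
        have hre := (Complex.le_def.mp h0').1
        simp only [Complex.zero_re, Complex.sub_re] at hre
        have hx : (star x ⬝ᵥ ((∑ j, A j * A j) *ᵥ x)).re ≤ (star x ⬝ᵥ x).re := by linarith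
        refine le_trans ?_ hx
        rw [dot_sum_mulVec, Complex.re_sum]
        exact Finset.single_le_sum (f := fun j => (star x ⬝ᵥ ((A j * A j) *ᵥ x)).re)
          (fun j _ => (hAA j).re_dotProduct_nonneg x) (Finset.mem_univ i)
    simp only [ge_iff_le]
    refine Finset.sum_le_sum fun i _ => ?_
    rw [htrz i, htry i]
    have h1 : 0 ≤ (y i).re := (hAA i).re_dotProduct_nonneg v
    have h2 := hkey i
    nlinarith


end QIT
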